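/- For every u ∈ ℝ^E and every real λ < 1, the support of the Sparsegen routing output p* = sparsegen(u, λ) satisfies {i : p*_i > 0} = {i : u_i > τ}, and this set has exactly k* elements, where τ = (U_{k*} − 1 + λ)/k* and k* = max{k ∈ {1,…,E} : 1 − λ + k·u_(k) > U_k}. -/

import Mathlib

noncomputable section

/-- The probability simplex in `ℝ^E`. -/
def simplex (E : ℕ) : Set (EuclideanSpace ℝ (Fin E)) :=
  {p | (∀ i, 0 ≤ p i) ∧ ∑ i, p i = 1}

/-- The Sparsegen objective `g_{u,λ}(p) = ‖p − u‖₂² − λ‖p‖₂²`. -/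
def sparsegenObj {E : ℕ} (u : EuclideanSpace ℝ (Fin E)) (lam : ℝ)
    (p : EuclideanSpace ℝ (Fin E)) : ℝ :=
  ‖p - u‖ ^ 2 - lam * ‖p‖ ^ 2

/-- `U k = Σ_{i=1}^{k} u_(i)` where `u_(i) = u (σ i)` are the sorted coordinates;
here `k : Fin E` corresponds to the paper's 1-based index `k + 1`. -/
def sortedPartialSum {E : ℕ} (u : EuclideanSpace ℝ (Fin E)) (σ : Equiv.Perm (Fin E))
    (k : Fin E) : ℝ :=
  ∑ i ∈ Finset.Iic k, u (σ i)

lemma euclid_norm_sq {E : ℕ} (x : EuclideanSpace ℝ (Fin E)) : ‖x‖ ^ 2 = ∑ i, x i ^ 2 := by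
  rw [EuclideanSpace.norm_eq, Real.sq_sqrt (by positivity)]
  simp [sq_abs]

lemma sparsegenObj_eq {E : ℕ} (u : EuclideanSpace ℝ (Fin E)) (lam : ℝ)
    (x : EuclideanSpace ℝ (Fin E)) :
    sparsegenObj u lam x = ∑ i, ((x i - u i) ^ 2 - lam * x i ^ 2) := by
  unfold sparsegenObj
  rw [euclid_norm_sq, euclid_norm_sq, Finset.mul_sum, ← Finset.sum_sub_distrib]
  exact Finset.sum_congr rfl fun i _ => by simp [PiLp.sub_apply]

/-- For every `u ∈ ℝ^E` and `λ < 1`, the support of the Sparsegen routing output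
`p* = sparsegen(u, λ)` (the unique minimizer of the objective over the simplex)
satisfies `{i : p*_i > 0} = {i : u_i > τ}`, and this set has exactly `k*` elements
(0-based: `kstar + 1` elements), where `τ = (U_{k*} − 1 + λ)/k*` and `k*` is the
maximal index with `1 − λ + k·u_(k) > U_k`. -/
theorem sparsegen_support (E : ℕ) (hE : 1 ≤ E)
    (u : EuclideanSpace ℝ (Fin E)) (σ : Equiv.Perm (Fin E))
    (hσ : Antitone fun i => u (σ i)) (lam : ℝ) (hlam : lam < 1)
    (kstar : Fin E)
    (hmem : 1 - lam + ((kstar : ℕ) + 1) * u (σ kstar) > sortedPartialSum u σ kstar)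
    (hmax : ∀ k : Fin E,
      (1 - lam + ((k : ℕ) + 1) * u (σ k) > sortedPartialSum u σ k) → k ≤ kstar)
    (τ : ℝ) (hτ : τ = (sortedPartialSum u σ kstar - 1 + lam) / ((kstar : ℕ) + 1))
    (p : EuclideanSpace ℝ (Fin E)) (hp : p ∈ simplex E)
    (hmin : IsMinOn (sparsegenObj u lam) (simplex E) p) :
    {i : Fin E | 0 < p i} = {i : Fin E | τ < u i} ∧
    {i : Fin E | 0 < p i}.ncard = (kstar : ℕ) + 1 := by
  have h1 : (0:ℝ) < 1 - lam := by linarith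
  have hk1 : (0:ℝ) < (kstar : ℕ) + 1 := by positivity
  have hkτ : (((kstar : ℕ) : ℝ) + 1) * τ = sortedPartialSum u σ kstar - 1 + lam := by
    rw [hτ]; field_simp
  -- coordinates up to kstar are above τ
  have hgt : ∀ j : Fin E, j ≤ kstar → τ < u (σ j) := by
    intro j hj
    have h0 : τ < u (σ kstar) := by nlinarith [hmem, hkτ]
    exact lt_of_lt_of_le h0 (hσ hj)
  -- coordinates past kstar are at most τ
  have hle : ∀ j : Fin E, kstar < j → u (σ j) ≤ τ := by
    intro j hj
    have hjv : (kstar : ℕ) < (j : ℕ) := hj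
    have hmE : (kstar : ℕ) + 1 < E := lt_of_le_of_lt hjv j.isLt
    set m : Fin E := ⟨(kstar : ℕ) + 1, hmE⟩ with hm
    have hmvn : (m : ℕ) = (kstar : ℕ) + 1 := rfl
    have hIio : Finset.Iio m = Finset.Iic kstar := by
      ext x
      simp only [Finset.mem_Iio, Finset.mem_Iic, Fin.lt_def, Fin.le_def, hmvn]
      omega
    have hsum : sortedPartialSum u σ m = sortedPartialSum u σ kstar + u (σ m) := by
      unfold sortedPartialSum
      rw [← Finset.Iio_insert, Finset.sum_insert (by simp), hIio, add_comm]
    have hnc : ¬ (1 - lam + ((m : ℕ) + 1) * u (σ m) > sortedPartialSum u σ m) := by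
      intro h
      have h2 : (m : ℕ) ≤ (kstar : ℕ) := hmax m h
      omega
    push_neg at hnc
    have hmv : ((m : ℕ) : ℝ) = ((kstar : ℕ) : ℝ) + 1 := by
      rw [hmvn]; push_cast; ring
    rw [hsum, hmv] at hnc
    have hmτ : u (σ m) ≤ τ := by
      have hmul : (((kstar : ℕ) : ℝ) + 1) * u (σ m) ≤ (((kstar : ℕ) : ℝ) + 1) * τ := by
        rw [hkτ]; ring_nf; ring_nf at hnc; linarith
      exact le_of_mul_le_mul_left hmul hk1
    have hmj : m ≤ j := by
      have : (m : ℕ) ≤ (j : ℕ) := by omega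
      exact this
    exact le_trans (hσ hmj) hmτ
  -- characterize {i | τ < u i}
  have hchar : ∀ i : Fin E, τ < u i ↔ σ.symm i ≤ kstar := by
    intro i
    constructor
    · intro h
      by_contra hc
      push_neg at hc
      have := hle _ hc
      rw [Equiv.apply_symm_apply] at this
      linarith
    · intro h
      have := hgt _ h
      rwa [Equiv.apply_symm_apply] at this
  -- the candidate minimizer
  set q : EuclideanSpace ℝ (Fin E) := WithLp.toLp 2 (fun i => max (u i - τ) 0 / (1 - lam)) with hqdef
  have hqapp : ∀ i, q i = max (u i - τ) 0 / (1 - lam) := fun i => rfl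
  have hq0 : ∀ i, 0 ≤ q i := fun i => div_nonneg (le_max_right _ _) h1.le
  have hqpos : ∀ i, (0 < q i ↔ τ < u i) := by
    intro i
    constructor
    · intro h
      rw [hqapp] at h
      have ha : 0 < max (u i - τ) 0 := by
        by_contra hc
        push_neg at hc
        have h0 : max (u i - τ) 0 = 0 := le_antisymm hc (le_max_right _ _)
        rw [h0, zero_div] at h
        exact lt_irrefl 0 h
      by_contra hc
      push_neg at hc
      rw [max_eq_right (by linarith)] at ha
      exact lt_irrefl 0 ha
    · intro h
      rw [hqapp]
      exact div_pos (lt_max_iff.2 (Or.inl (by linarith))) h1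
  -- sum of q is 1
  have hsummax : ∑ i, max (u i - τ) 0 = 1 - lam := by
    have h2 : ∑ i, max (u i - τ) 0 = ∑ j, max (u (σ j) - τ) 0 :=
      (Equiv.sum_comp σ (fun i => max (u i - τ) 0)).symm
    rw [h2, ← Finset.sum_add_sum_compl (Finset.Iic kstar)]
    have ha : ∑ j ∈ Finset.Iic kstar, max (u (σ j) - τ) 0
        = ∑ j ∈ Finset.Iic kstar, (u (σ j) - τ) := by
      refine Finset.sum_congr rfl fun j hj => ?_
      rw [max_eq_left]
      have := hgt j (Finset.mem_Iic.mp hj); linarith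
    have hb : ∑ j ∈ (Finset.Iic kstar)ᶜ, max (u (σ j) - τ) 0 = 0 := by
      refine Finset.sum_eq_zero fun j hj => ?_
      rw [max_eq_right]
      have hjk : kstar < j := by
        simp [Finset.mem_compl, Finset.mem_Iic] at hj
        exact hj
      have := hle j hjk; linarith
    rw [ha, hb, add_zero, Finset.sum_sub_distrib, Finset.sum_const, Fin.card_Iic,
      nsmul_eq_mul]
    unfold sortedPartialSum at hkτ
    push_cast
    push_cast at hkτ
    linarith
  have hsumq : ∑ i, q i = 1 := by
    simp only [hqapp]
    rw [← Finset.sum_div, hsummax, div_self h1.ne']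
  have hqsimplex : q ∈ simplex E := ⟨hq0, hsumq⟩
  -- decomposition of u
  have hqr : ∀ i, u i = (1 - lam) * q i + τ + min (u i - τ) 0 := by
    intro i
    have hmm : max (u i - τ) 0 + min (u i - τ) 0 = u i - τ := by
      simpa using max_add_min (u i - τ) 0
    rw [hqapp]
    field_simp
    linarith
  have hqrzero : ∀ i, q i * min (u i - τ) 0 = 0 := by
    intro i
    rcases le_or_gt (u i) τ with h | h
    · have : q i = 0 := by
        rw [hqapp, max_eq_right (by linarith), zero_div]
      rw [this, zero_mul]
    · rw [min_eq_right (by linarith), mul_zero]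
  -- per-coordinate identity
  have hterm : ∀ i, ((p i - u i) ^ 2 - lam * p i ^ 2) - ((q i - u i) ^ 2 - lam * q i ^ 2)
      = (1 - lam) * (p i - q i) ^ 2 - 2 * τ * (p i - q i)
        - 2 * (p i * min (u i - τ) 0) := by
    intro i
    have h1 := hqr i
    have h2 := hqrzero i
    linear_combination (-2 : ℝ) * (p i - q i) * h1 + 2 * h2
  have htau0 : ∑ i, (2 * τ * (p i - q i)) = 0 := by
    rw [← Finset.mul_sum, Finset.sum_sub_distrib, hp.2, hsumq]
    ring
  have hsum_eq : sparsegenObj u lam p - sparsegenObj u lam q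
      = (1 - lam) * (∑ i, (p i - q i) ^ 2) - 2 * ∑ i, p i * min (u i - τ) 0 := by
    rw [sparsegenObj_eq, sparsegenObj_eq, ← Finset.sum_sub_distrib,
      Finset.sum_congr rfl fun i _ => hterm i, Finset.sum_sub_distrib,
      Finset.sum_sub_distrib, htau0, sub_zero, ← Finset.mul_sum, ← Finset.mul_sum]
  have hrle : ∑ i, p i * min (u i - τ) 0 ≤ 0 := by
    refine Finset.sum_nonpos fun i _ => ?_
    have := mul_nonneg (hp.1 i) (neg_nonneg.2 (min_le_right (u i - τ) 0))
    linarith [this]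
  have hle0 : sparsegenObj u lam p - sparsegenObj u lam q ≤ 0 :=
    sub_nonpos.2 (hmin hqsimplex)
  have hSnn : 0 ≤ ∑ i, (p i - q i) ^ 2 :=
    Finset.sum_nonneg fun i _ => sq_nonneg _
  have hS0 : ∑ i, (p i - q i) ^ 2 = 0 := by nlinarith [hsum_eq, hrle, hle0, hSnn]
  have hpq : ∀ i, p i = q i := by
    intro i
    have := (Finset.sum_eq_zero_iff_of_nonneg fun i _ => sq_nonneg (p i - q i)).mp hS0 i
      (Finset.mem_univ i)
    have := sq_eq_zero_iff.mp this
    linarith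
  have hsupp : {i : Fin E | 0 < p i} = {i : Fin E | τ < u i} := by
    ext i
    simp only [Set.mem_setOf_eq, hpq i]
    exact hqpos i
  refine ⟨hsupp, ?_⟩
  rw [hsupp]
  have hset : {i : Fin E | τ < u i} = ↑(Finset.image σ (Finset.Iic kstar)) := by
    ext i
    simp only [Set.mem_setOf_eq, Finset.coe_image, Set.mem_image, Finset.mem_coe,
      Finset.mem_Iic]
    constructor
    · intro h
      exact ⟨σ.symm i, (hchar i).mp h, Equiv.apply_symm_apply σ i⟩
    · rintro ⟨j, hj, rfl⟩
      exact hgt j hj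
  rw [hset, Set.ncard_coe_finset,
    Finset.card_image_of_injective _ σ.injective, Fin.card_Iic]
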